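/- The derivative of the Mehler-type kernel: for 0 < s < 1, the kernel K_s(x,y) = c_k ((1-s²)/(4s))^{k+1/2} exp(-(1/4)(s+1/s)(x²+y²)) E_k(((1-s²)/(2s))x, y) satisfies T_{k,x} K_s(x,y) = -(1/2)[s(x+y) + (1/s)(x-y)] K_s(x,y), where T_{k,x} is the Dunkl operator acting in the variable x. -/

import Mathlib

open MeasureTheory Real

/-- The Laguerre polynomial of index `α`, via the Rodrigues formula. -/
noncomputable def lag (α : ℝ) (n : ℕ) (x : ℝ) : ℝ :=
  (1 / (n.factorial : ℝ)) * x ^ (-α) * Real.exp x *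
    iteratedDeriv n (fun t : ℝ => t ^ ((n : ℝ) + α) * Real.exp (-t)) x

/-- The generalized (Dunkl–)Hermite polynomial `H_n^k`. -/
noncomputable def genHermite (k : ℝ) (n : ℕ) (x : ℝ) : ℝ :=
  if n % 2 = 0 then
    (-1) ^ (n / 2) *
      Real.sqrt (((n / 2).factorial : ℝ) / Real.Gamma ((n / 2 : ℕ) + k + 1/2)) *
        lag (k - 1/2) (n / 2) (x ^ 2)
  else
    (-1) ^ (n / 2) *
      Real.sqrt (((n / 2).factorial : ℝ) / Real.Gamma ((n / 2 : ℕ) + k + 3/2)) *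
        x * lag (k + 1/2) (n / 2) (x ^ 2)

/-- The Dunkl–Hermite function `h_n^k(x) = e^{-x²/2} H_n^k(x)`. -/
noncomputable def dunklHermite (k : ℝ) (n : ℕ) (x : ℝ) : ℝ :=
  Real.exp (-x ^ 2 / 2) * genHermite k n x

/-- `j_α(it)`: the normalized Bessel function at a purely imaginary argument. -/
noncomputable def besselI (α t : ℝ) : ℝ :=
  Real.Gamma (α + 1) *
    ∑' n : ℕ, (t / 2) ^ (2 * n) / ((n.factorial : ℝ) * Real.Gamma ((n : ℝ) + α + 1))

/-- The rank-one Dunkl kernel. -/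
noncomputable def dunklKernel (k x y : ℝ) : ℝ :=
  besselI (k - 1/2) (x * y) + (x * y) / (2 * k + 1) * besselI (k + 1/2) (x * y)

/-- The normalizing constant `c_k = (∫_ℝ e^{-x²}|x|^{2k}dx)⁻¹`. -/
noncomputable def ck (k : ℝ) : ℝ :=
  (∫ x : ℝ, Real.exp (-x ^ 2) * |x| ^ (2 * k))⁻¹

/-- The Mehler kernel `U_k(r,y,z) = Σ r^n h_n^k(y) h_n^k(z)`. -/
noncomputable def mehlerKernel (k r y z : ℝ) : ℝ :=
  ∑' n : ℕ, r ^ n * dunklHermite k n y * dunklHermite k n z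

/-- The Dunkl–Hermite heat kernel `P_k(t,x,y) = Σ e^{-t(2n+2k+1)} h_n^k(x) h_n^k(y)`. -/
noncomputable def heatKernel (k t x y : ℝ) : ℝ :=
  ∑' n : ℕ, Real.exp (-t * (2 * n + 2 * k + 1)) * dunklHermite k n x * dunklHermite k n y

/-- The Mehler-type kernel `K_s(x,y)`. -/
noncomputable def Ks (k s x y : ℝ) : ℝ :=
  ck k * ((1 - s ^ 2) / (4 * s)) ^ (k + 1/2) *
    Real.exp (-(1/4) * (s + 1/s) * (x ^ 2 + y ^ 2)) *
      dunklKernel k (((1 - s ^ 2) / (2 * s)) * x) y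

noncomputable def bb (a : ℝ) (n : ℕ) : ℝ :=
  (1/4 : ℝ) ^ n / (n.factorial * Real.Gamma (n + a))

noncomputable def gg (a t : ℝ) : ℝ := ∑' n : ℕ, bb a n * t ^ (2 * n)

lemma Gamma_na_pos {a : ℝ} (ha : 0 < a) (n : ℕ) : 0 < Real.Gamma (n + a) :=
  Real.Gamma_pos_of_pos (by positivity)

lemma bb_pos {a : ℝ} (ha : 0 < a) (n : ℕ) : 0 < bb a n := by
  have := Gamma_na_pos ha n
  have h2 : (0:ℝ) < n.factorial := by positivity
  unfold bb
  positivity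

lemma bb_succ {a : ℝ} (ha : 0 < a) (n : ℕ) :
    bb a (n + 1) = bb a n / (4 * (n + 1) * (n + a)) := by
  have hG : Real.Gamma (n + a) ≠ 0 := (Gamma_na_pos ha n).ne'
  have hna : ((n : ℝ) + a) ≠ 0 := by positivity
  have hfac : ((n.factorial : ℝ)) ≠ 0 := by positivity
  have hn1 : ((n : ℝ) + 1) ≠ 0 := by positivity
  unfold bb
  rw [Nat.factorial_succ]
  push_cast
  rw [show ((n : ℝ) + 1 + a) = ((n : ℝ) + a) + 1 by ring,
    Real.Gamma_add_one hna]
  field_simp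
  ring

lemma bb_succ_mul {a : ℝ} (n : ℕ) :
    bb a (n + 1) * (2 * ((n : ℝ) + 1)) = bb (a + 1) n / 2 := by
  have hfac : ((n.factorial : ℝ)) ≠ 0 := by positivity
  have hn1 : ((n : ℝ) + 1) ≠ 0 := by positivity
  unfold bb
  rw [Nat.factorial_succ]
  push_cast
  rw [show ((n : ℝ) + 1 + a) = ((n : ℝ) + (a + 1)) by ring]
  by_cases hG : Real.Gamma ((n : ℝ) + (a + 1)) = 0
  · simp [hG]
  · field_simp
    ring

lemma summable_u {a : ℝ} (ha : 0 < a) {R : ℝ} (hR : 1 ≤ R) :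
    Summable (fun n : ℕ => bb a n * (2 * n + 2) * R ^ (2 * n)) := by
  have hR0 : 0 < R := by linarith
  apply summable_of_ratio_norm_eventually_le (r := 1/2) (by norm_num)
  filter_upwards [Filter.eventually_ge_atTop (⌈R ^ 2⌉₊)] with n hn
  have hR2 : R ^ 2 ≤ (n : ℝ) := le_trans (Nat.le_ceil _) (by exact_mod_cast hn)
  have hb := bb_pos ha n
  have hbs := bb_pos ha (n + 1)
  have hpow : (0:ℝ) < R ^ (2 * n) := by positivity
  have h1 : (0:ℝ) ≤ bb a n * (2 * n + 2) * R ^ (2 * n) := by positivity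
  have h2 : (0:ℝ) ≤ bb a (n+1) * (2 * ((n+1:ℕ):ℝ) + 2) * R ^ (2 * (n+1)) := by positivity
  rw [Real.norm_of_nonneg h2, Real.norm_of_nonneg h1, bb_succ ha n]
  have hna : (0:ℝ) < (n : ℝ) + a := by positivity
  rw [show 2 * (n + 1) = 2 * n + 2 by ring, pow_add]
  rw [div_mul_eq_mul_div, div_mul_eq_mul_div, div_le_iff₀ (by positivity)]
  push_cast
  have hn_a : R ^ 2 ≤ (n : ℝ) + a := by linarith
  have key : (2*((n:ℝ)+1)+2) * R^2 ≤ 1/2 * (2*(n:ℝ)+2) * (4*((n:ℝ)+1)*((n:ℝ)+a)) := by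
    nlinarith [mul_le_mul_of_nonneg_left hn_a (show (0:ℝ) ≤ 2*((n:ℝ)+1)+2 by positivity),
      mul_nonneg (mul_nonneg (show (0:ℝ) ≤ 2*(n:ℝ) by positivity) (show (0:ℝ) ≤ (n:ℝ)+1 by positivity)) hna.le]
  nlinarith [mul_le_mul_of_nonneg_left key (mul_pos hb hpow).le]

lemma term_bound {a : ℝ} (ha : 0 < a) {R : ℝ} (hR : 1 ≤ R) {x : ℝ} (hx : |x| ≤ R) (n : ℕ) :
    ‖bb a n * ((2 * n : ℕ) * x ^ (2 * n - 1))‖ ≤ bb a n * (2 * n + 2) * R ^ (2 * n) := by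
  have hb := bb_pos ha n
  have h1 : ‖bb a n * ((2 * n : ℕ) * x ^ (2 * n - 1))‖
      = bb a n * ((2 * n : ℕ) * |x| ^ (2 * n - 1)) := by
    rw [norm_mul, norm_mul, norm_pow, Real.norm_of_nonneg hb.le,
      Real.norm_of_nonneg (by positivity : (0:ℝ) ≤ ((2*n : ℕ) : ℝ)), Real.norm_eq_abs]
  rw [h1]
  have h2 : |x| ^ (2 * n - 1) ≤ R ^ (2 * n) := by
    calc |x| ^ (2 * n - 1) ≤ R ^ (2 * n - 1) := by
          exact pow_le_pow_left₀ (abs_nonneg x) hx _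
      _ ≤ R ^ (2 * n) := pow_le_pow_right₀ hR (Nat.sub_le _ _)
  have h3 : ((2 * n : ℕ) : ℝ) ≤ 2 * n + 2 := by push_cast; linarith
  calc bb a n * ((2 * n : ℕ) * |x| ^ (2 * n - 1))
      ≤ bb a n * ((2 * n + 2) * R ^ (2 * n)) := by
        apply mul_le_mul_of_nonneg_left _ hb.le
        apply mul_le_mul h3 h2 (by positivity) (by positivity)
    _ = bb a n * (2 * n + 2) * R ^ (2 * n) := by ring

lemma summable_term {a : ℝ} (ha : 0 < a) (t : ℝ) :
    Summable (fun n : ℕ => bb a n * t ^ (2 * n)) := by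
  have hR : (1:ℝ) ≤ |t| + 1 := by linarith [abs_nonneg t]
  apply Summable.of_norm_bounded (summable_u ha hR)
  intro n
  have hb := bb_pos ha n
  rw [norm_mul, norm_pow, Real.norm_of_nonneg hb.le, Real.norm_eq_abs]
  calc bb a n * |t| ^ (2 * n) ≤ bb a n * (1 * (|t| + 1) ^ (2 * n)) := by
        rw [one_mul]
        exact mul_le_mul_of_nonneg_left
          (pow_le_pow_left₀ (abs_nonneg t) (by linarith) _) hb.le
    _ ≤ bb a n * ((2 * n + 2) * (|t| + 1) ^ (2 * n)) := by
        apply mul_le_mul_of_nonneg_left _ hb.le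
        apply mul_le_mul_of_nonneg_right (by push_cast; linarith : (1:ℝ) ≤ 2 * (n:ℝ) + 2) (by positivity)
    _ = bb a n * (2 * n + 2) * (|t| + 1) ^ (2 * n) := by ring

lemma summable_deriv_term {a : ℝ} (ha : 0 < a) (t : ℝ) :
    Summable (fun n : ℕ => bb a n * ((2 * n : ℕ) * t ^ (2 * n - 1))) := by
  have hR : (1:ℝ) ≤ |t| + 1 := by linarith [abs_nonneg t]
  exact Summable.of_norm_bounded (summable_u ha hR)
    (fun n => term_bound ha hR (by linarith) n)

lemma hasDerivAt_gg {a : ℝ} (ha : 0 < a) (t : ℝ) :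
    HasDerivAt (gg a) (t / 2 * gg (a + 1) t) t := by
  have hR : (1:ℝ) ≤ |t| + 1 := by linarith [abs_nonneg t]
  have hmem : t ∈ Metric.ball (0:ℝ) (|t| + 1) := by
    simp [Metric.mem_ball, Real.dist_eq]
  have key : HasDerivAt (fun x : ℝ => ∑' n : ℕ, bb a n * x ^ (2 * n))
      (∑' n : ℕ, bb a n * ((2 * n : ℕ) * t ^ (2 * n - 1))) t := by
    apply hasDerivAt_tsum_of_isPreconnected (summable_u ha hR) Metric.isOpen_ball
      (convex_ball (0:ℝ) (|t| + 1)).isPreconnected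
      (fun n x _ => (hasDerivAt_pow (2 * n) x).const_mul (bb a n))
      (fun n x hxmem => ?_) hmem (summable_term ha t) hmem
    rw [Metric.mem_ball, Real.dist_eq, sub_zero] at hxmem
    have hxR : |x| ≤ |t| + 1 := hxmem.le
    exact term_bound ha hR hxR n
  have heq : (∑' n : ℕ, bb a n * ((2 * n : ℕ) * t ^ (2 * n - 1)))
      = t / 2 * gg (a + 1) t := by
    rw [(summable_deriv_term ha t).tsum_eq_zero_add]
    simp only [Nat.mul_zero, Nat.cast_zero, zero_mul, mul_zero, zero_add]
    have : ∀ n : ℕ, bb a (n + 1) * (((2 * (n + 1) : ℕ) : ℝ) * t ^ (2 * (n + 1) - 1))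
        = t / 2 * (bb (a + 1) n * t ^ (2 * n)) := by
      intro n
      have h1 := bb_succ_mul (a := a) n
      have h2 : 2 * (n + 1) - 1 = 2 * n + 1 := by omega
      rw [h2]
      push_cast
      rw [pow_succ]
      linear_combination (t ^ (2 * n) * t) * h1
    rw [tsum_congr this, tsum_mul_left]
    rfl
  rw [← heq]
  exact key

lemma gg_even (a t : ℝ) : gg a (-t) = gg a t := by
  unfold gg
  exact tsum_congr fun n => by rw [Even.neg_pow (even_two_mul n)]

lemma bb_key {a : ℝ} (ha : 0 < a) (n : ℕ) :
    bb a (n + 1) - a * bb (a + 1) (n + 1) = (1/4) * bb (a + 2) n := by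
  have hG : Real.Gamma ((n : ℝ) + 1 + a) ≠ 0 :=
    (Real.Gamma_pos_of_pos (by positivity)).ne'
  have hfac : ((n.factorial : ℝ)) ≠ 0 := by positivity
  have hn1 : ((n : ℝ) + 1) ≠ 0 := by positivity
  have hna : ((n : ℝ) + 1 + a) ≠ 0 := by positivity
  unfold bb
  rw [Nat.factorial_succ]
  push_cast
  rw [show ((n : ℝ) + 1 + (a + 1)) = ((n : ℝ) + 1 + a) + 1 by ring,
    show ((n : ℝ) + (a + 2)) = ((n : ℝ) + 1 + a) + 1 by ring,
    Real.Gamma_add_one hna]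
  field_simp
  ring

lemma bb_key0 {a : ℝ} (ha : 0 < a) : bb a 0 - a * bb (a + 1) 0 = 0 := by
  have hG : Real.Gamma a ≠ 0 := (Real.Gamma_pos_of_pos ha).ne'
  unfold bb
  simp only [pow_zero, Nat.factorial_zero, Nat.cast_zero, Nat.cast_one, zero_add, one_mul]
  rw [Real.Gamma_add_one ha.ne']
  field_simp
  simp

lemma gg_identity {a : ℝ} (ha : 0 < a) (t : ℝ) :
    gg a t = a * gg (a + 1) t + t ^ 2 / 4 * gg (a + 2) t := by
  have ha1 : (0:ℝ) < a + 1 := by linarith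
  have ha2 : (0:ℝ) < a + 2 := by linarith
  have h1 := summable_term ha t
  have h2 := summable_term ha1 t
  have h3 := summable_term ha2 t
  have hc : Summable (fun n : ℕ => (bb a n - a * bb (a + 1) n) * t ^ (2 * n)) := by
    have := h1.sub (h2.mul_left a)
    convert this using 2 with n
    all_goals first | rfl | ring
  have step1 : gg a t - a * gg (a + 1) t
      = ∑' n : ℕ, (bb a n - a * bb (a + 1) n) * t ^ (2 * n) := by
    unfold gg
    rw [← tsum_mul_left, ← h1.tsum_sub (h2.mul_left a)]
    exact tsum_congr fun n => by ring
  have step2 : (∑' n : ℕ, (bb a n - a * bb (a + 1) n) * t ^ (2 * n))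
      = t ^ 2 / 4 * gg (a + 2) t := by
    rw [hc.tsum_eq_zero_add, bb_key0 ha]
    simp only [zero_mul, zero_add]
    have : ∀ n : ℕ, (bb a (n + 1) - a * bb (a + 1) (n + 1)) * t ^ (2 * (n + 1))
        = t ^ 2 / 4 * (bb (a + 2) n * t ^ (2 * n)) := by
      intro n
      rw [bb_key ha n, show 2 * (n + 1) = 2 * n + 2 by ring, pow_add]
      ring
    rw [tsum_congr this, tsum_mul_left]
    rfl
  have := step1.trans step2
  linarith

lemma besselI_gg (α t : ℝ) : besselI α t = Real.Gamma (α + 1) * gg (α + 1) t := by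
  unfold besselI gg bb
  congr 1
  apply tsum_congr
  intro n
  rw [show ((n : ℝ) + (α + 1)) = (n : ℝ) + α + 1 by ring,
    div_pow, show ((2:ℝ)) ^ (2 * n) = 4 ^ n by rw [pow_mul]; norm_num]
  rw [div_pow, one_pow]
  have h4 : ((4:ℝ)) ^ n ≠ 0 := by positivity
  field_simp

noncomputable def ggF (k t : ℝ) : ℝ := gg (k + 1/2) t + t / 2 * gg (k + 1/2 + 1) t

noncomputable def ggF' (k t : ℝ) : ℝ :=
  t / 2 * gg (k + 1/2 + 1) t + (1/2 * gg (k + 1/2 + 1) t + t ^ 2 / 4 * gg (k + 1/2 + 2) t)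

lemma hasDerivAt_ggF {k : ℝ} (hk : 0 ≤ k) (t : ℝ) :
    HasDerivAt (ggF k) (ggF' k t) t := by
  have ha : (0:ℝ) < k + 1/2 := by linarith
  have ha1 : (0:ℝ) < k + 1/2 + 1 := by linarith
  have h := (hasDerivAt_gg ha t).add
    (((hasDerivAt_id t).div_const 2).mul (hasDerivAt_gg ha1 t))
  have harg : (k + 1/2 + 1 + 1 : ℝ) = k + 1/2 + 2 := by ring
  rw [harg] at h
  simp only [id_eq] at h
  convert h using 1
  all_goals first | rfl | (unfold ggF'; ring)

lemma dunklKernel_ggF {k : ℝ} (hk : 0 ≤ k) (z y : ℝ) :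
    dunklKernel k z y = Real.Gamma (k + 1/2) * ggF k (z * y) := by
  have ha : (0:ℝ) < k + 1/2 := by linarith
  have h2k : (2 * k + 1 : ℝ) ≠ 0 := by positivity
  unfold dunklKernel ggF
  rw [besselI_gg, besselI_gg,
    show (k - 1/2 + 1 : ℝ) = k + 1/2 by ring,
    Real.Gamma_add_one ha.ne']
  field_simp

lemma dunklKernel_diff {k : ℝ} (hk : 0 ≤ k) (z y : ℝ) :
    dunklKernel k z y - dunklKernel k (-z) y
      = Real.Gamma (k + 1/2) * ((z * y) * gg (k + 1/2 + 1) (z * y)) := by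
  rw [dunklKernel_ggF hk, dunklKernel_ggF hk]
  have h1 : (-z) * y = -(z * y) := by ring
  rw [h1]
  unfold ggF
  rw [gg_even, gg_even]
  ring

lemma main_aux {k : ℝ} (hk : 0 ≤ k) {lam : ℝ} (hlam : lam ≠ 0) (A C y : ℝ)
    {x : ℝ} (hx : x ≠ 0) :
    deriv (fun u : ℝ => C * (Real.exp (-A * (u ^ 2 + y ^ 2)) * dunklKernel k (lam * u) y)) x
      + k * (C * (Real.exp (-A * (x ^ 2 + y ^ 2)) * dunklKernel k (lam * x) y)
          - C * (Real.exp (-A * ((-x) ^ 2 + y ^ 2)) * dunklKernel k (lam * (-x)) y)) / x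
      = (lam * y - 2 * A * x)
        * (C * (Real.exp (-A * (x ^ 2 + y ^ 2)) * dunklKernel k (lam * x) y)) := by
  have ha : (0:ℝ) < k + 1/2 := by linarith
  have hExpIn : HasDerivAt (fun u : ℝ => -A * (u ^ 2 + y ^ 2)) (-A * (2 * x)) x := by
    have h := ((hasDerivAt_pow 2 x).add_const (y ^ 2)).const_mul (-A)
    simpa using h
  have hExp := hExpIn.exp
  have hlin : HasDerivAt (fun u : ℝ => lam * u * y) (lam * y) x := by
    have h := ((hasDerivAt_id x).const_mul lam).mul_const y
    simpa using h
  have hFc : HasDerivAt (fun u : ℝ => ggF k (lam * u * y))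
      (ggF' k (lam * x * y) * (lam * y)) x :=
    (hasDerivAt_ggF hk (lam * x * y)).comp (h₂ := ggF k) x hlin
  have hDK : HasDerivAt (fun u : ℝ => dunklKernel k (lam * u) y)
      (Real.Gamma (k + 1/2) * (ggF' k (lam * x * y) * (lam * y))) x := by
    have h := hFc.const_mul (Real.Gamma (k + 1/2))
    have hfun : (fun u : ℝ => Real.Gamma (k + 1/2) * ggF k (lam * u * y))
        = fun u : ℝ => dunklKernel k (lam * u) y :=
      funext fun u => (dunklKernel_ggF hk (lam * u) y).symm
    rw [hfun] at h
    exact h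
  have hK := (hExp.mul hDK).const_mul C
  simp only [Pi.mul_def] at hK
  rw [hK.deriv]
  rw [show lam * (-x) = -(lam * x) by ring, neg_sq]
  have hdiff := dunklKernel_diff hk (lam * x) y
  have hgid := gg_identity ha (lam * x * y)
  have hrw : dunklKernel k (lam * x) y - dunklKernel k (-(lam * x)) y
      = Real.Gamma (k + 1/2) * (lam * x * y * gg (k + 1/2 + 1) (lam * x * y)) := hdiff
  have hsub : C * (Real.exp (-A * (x ^ 2 + y ^ 2)) * dunklKernel k (lam * x) y)
      - C * (Real.exp (-A * (x ^ 2 + y ^ 2)) * dunklKernel k (-(lam * x)) y)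
      = C * Real.exp (-A * (x ^ 2 + y ^ 2))
        * (Real.Gamma (k + 1/2) * (lam * x * y * gg (k + 1/2 + 1) (lam * x * y))) := by
    rw [← hrw]; ring
  rw [hsub, dunklKernel_ggF hk (lam * x) y]
  unfold ggF ggF'
  set E := Real.exp (-A * (x ^ 2 + y ^ 2)) with hE
  set G := Real.Gamma (k + 1/2) with hG
  set g1 := gg (k + 1/2) (lam * x * y) with hg1
  set g2 := gg (k + 1/2 + 1) (lam * x * y) with hg2
  set g3 := gg (k + 1/2 + 2) (lam * x * y) with hg3
  field_simp
  linear_combination (-8 * (C * E * G * lam * y)) * hgid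

/-- The Dunkl derivative (in `x`) of the Mehler-type kernel:
`T_{k,x} K_s(x,y) = -(1/2)[s(x+y) + (1/s)(x-y)] K_s(x,y)`. -/
theorem dunkl_deriv_mehler_type_kernel (k : ℝ) (hk : 0 ≤ k)
    (s : ℝ) (hs0 : 0 < s) (hs1 : s < 1) (y : ℝ) (x : ℝ) (hx : x ≠ 0) :
    deriv (fun u : ℝ => Ks k s u y) x + k * (Ks k s x y - Ks k s (-x) y) / x
      = -(1/2) * (s * (x + y) + (1/s) * (x - y)) * Ks k s x y := by
  have hs : s ≠ 0 := ne_of_gt hs0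
  have h1s : (0:ℝ) < 1 - s ^ 2 := by nlinarith
  have hlam_ne : ((1 - s ^ 2) / (2 * s) : ℝ) ≠ 0 := by positivity
  have hKs : ∀ u v : ℝ, Ks k s u v
      = (ck k * ((1 - s ^ 2) / (4 * s)) ^ (k + 1/2)) *
        (Real.exp (-(1/4 * (s + 1/s)) * (u ^ 2 + v ^ 2))
          * dunklKernel k (((1 - s ^ 2) / (2 * s)) * u) v) := by
    intro u v
    unfold Ks
    rw [show (-(1/4) * (s + 1/s) * (u ^ 2 + v ^ 2))
        = -(1/4 * (s + 1/s)) * (u ^ 2 + v ^ 2) by ring]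
    ring
  have hfun : (fun u : ℝ => Ks k s u y)
      = fun u : ℝ => (ck k * ((1 - s ^ 2) / (4 * s)) ^ (k + 1/2)) *
        (Real.exp (-(1/4 * (s + 1/s)) * (u ^ 2 + y ^ 2))
          * dunklKernel k (((1 - s ^ 2) / (2 * s)) * u) y) :=
    funext fun u => hKs u y
  rw [hfun, hKs x y, hKs (-x) y,
    main_aux hk hlam_ne (1/4 * (s + 1/s)) (ck k * ((1 - s ^ 2) / (4 * s)) ^ (k + 1/2)) y hx]
  rw [show ((1 - s ^ 2) / (2 * s) * y - 2 * (1/4 * (s + 1/s)) * x : ℝ)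
      = -(1/2) * (s * (x + y) + (1/s) * (x - y)) by field_simp; ring]
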